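/- arXiv:2007.12786 — 3 statements merged into one kernel-verified Lean document; each statement's English description precedes it below -/
import Mathlib

section
/- Fix integers p ≥ 1 and n ≥ 1 and reals w₁ ≥ 0, w₂ > 0, c > 0. Then there exists a constant C ∈ ℝ, depending only on p, n, w₁, w₂ and c, such that for all data points x₁, …, xₙ ∈ ℝ^p, all mixture weights π₁, π₂ ≥ 0 with π₁ + π₂ = 1, all means μ₁, μ₂ ∈ ℝ^p, and all symmetric positive definite p×p real matrices Σ₁, Σ₂ satisfying det Σ₁ ≤ det Σ₂ and having all eigenvalues at most c, the penalized SIA objective satisfies M ≤ −(n/2)(1 + w₂)( log det( (w₂/(1+w₂)) Σ₂ ) + p ) + C. -/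
open Matrix Real

/-- Multivariate Gaussian density
`N(x; μ, S) = (2π)^{-p/2} (det S)^{-1/2} exp(-(1/2)(x-μ)ᵀ S⁻¹ (x-μ))`. -/
noncomputable def gaussDensity {p : ℕ} (x μ : Fin p → ℝ) (S : Matrix (Fin p) (Fin p) ℝ) : ℝ :=
  (2 * Real.pi) ^ (-(p : ℝ) / 2) * S.det ^ (-(1 : ℝ) / 2) *
    Real.exp (-(1 / 2) * ((x - μ) ⬝ᵥ (S⁻¹ *ᵥ (x - μ))))

/-- Closed form of the KL divergence between the Gaussians `N(μ₁, S₁)` and `N(μ₂, S₂)`. -/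
noncomputable def gaussKL {p : ℕ} (μ₁ : Fin p → ℝ) (S₁ : Matrix (Fin p) (Fin p) ℝ)
    (μ₂ : Fin p → ℝ) (S₂ : Matrix (Fin p) (Fin p) ℝ) : ℝ :=
  (1 / 2) * (Real.log (S₂.det / S₁.det) - p + (S₂⁻¹ * S₁).trace +
    (μ₂ - μ₁) ⬝ᵥ (S₂⁻¹ *ᵥ (μ₂ - μ₁)))

/-- The penalized SIA objective for a two-component Gaussian mixture. -/
noncomputable def siaObj {p n : ℕ} (x : Fin n → Fin p → ℝ) (π₁ π₂ : ℝ)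
    (μ₁ μ₂ : Fin p → ℝ) (S₁ S₂ : Matrix (Fin p) (Fin p) ℝ) (w₁ w₂ : ℝ) : ℝ :=
  (∑ i, Real.log (π₁ * gaussDensity (x i) μ₁ S₁ + π₂ * gaussDensity (x i) μ₂ S₂))
    - w₁ * gaussKL μ₁ S₁ μ₂ S₂ - w₂ * gaussKL μ₂ S₂ μ₁ S₁



lemma trace_eq_sum_eig {p : ℕ} {A : Matrix (Fin p) (Fin p) ℝ} (hA : A.IsHermitian) :
    A.trace = ∑ i, hA.eigenvalues i := by
  simpa using hA.trace_eq_sum_eigenvalues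

open scoped MatrixOrder

lemma key_trace {p : ℕ} {A B : Matrix (Fin p) (Fin p) ℝ} (hA : A.PosDef) (hB : B.PosDef)
    (k : ℝ) (hk : 0 < k) :
    k * (Real.log (B.det / A.det) + p - p * Real.log k) ≤ (A⁻¹ * B).trace := by
  have hAi : (A⁻¹).PosDef := hA.inv
  set R := CFC.sqrt (A⁻¹) with hRdef
  have hR : R.PosSemidef := (CFC.sqrt_nonneg (A⁻¹)).posSemidef
  have hRR : R * R = A⁻¹ := CFC.sqrt_mul_sqrt_self (A⁻¹) hAi.posSemidef.nonneg
  have hRh : Rᴴ = R := hR.1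
  set Bc := R * B * R with hBcdef
  have htr : (A⁻¹ * B).trace = Bc.trace := by
    rw [← hRR, mul_assoc, trace_mul_comm]
  have hRx : ∀ x : Fin p → ℝ, x ≠ 0 → R *ᵥ x ≠ 0 := by
    intro x hx hcon
    have h0 : A⁻¹ *ᵥ x = 0 := by
      rw [← hRR, ← mulVec_mulVec, hcon, mulVec_zero]
    have hinj := Matrix.mulVec_injective_iff_isUnit.mpr hAi.isUnit
    exact hx (hinj (by simpa using h0))
  have hBcP : Bc.PosDef := by
    refine Matrix.PosDef.of_dotProduct_mulVec_pos ?_ ?_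
    · show Bcᴴ = Bc
      rw [hBcdef, conjTranspose_mul, conjTranspose_mul, hRh, hB.1, mul_assoc]
    · intro x hx
      have : star x ⬝ᵥ Bc *ᵥ x = star (R *ᵥ x) ⬝ᵥ B *ᵥ (R *ᵥ x) := by
        simp only [star_trivial, hBcdef, ← mulVec_mulVec]
        have hRt : Rᵀ = R := by rw [← conjTranspose_eq_transpose_of_trivial, hRh]
        rw [dotProduct_mulVec x R, ← mulVec_transpose, hRt]
      rw [this]
      exact hB.dotProduct_mulVec_pos (hRx x hx)
  have hdetR : R.det * R.det = (A.det)⁻¹ := by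
    rw [← det_mul, hRR, det_nonsing_inv, Ring.inverse_eq_inv']
  have hdetBc : Bc.det = B.det / A.det := by
    rw [hBcdef, det_mul, det_mul]
    field_simp [hA.det_pos.ne']
    rw [show R.det ^ 2 * B.det * A.det = B.det * ((R.det * R.det) * A.det) by ring,
      hdetR, inv_mul_cancel₀ hA.det_pos.ne', mul_one]
  -- eigenvalues of Bc
  have heig := hBcP.eigenvalues_pos
  have hsum : Bc.trace = ∑ i, hBcP.1.eigenvalues i := trace_eq_sum_eig hBcP.1
  have hprod : Bc.det = ∏ i, hBcP.1.eigenvalues i := by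
    simpa using hBcP.1.det_eq_prod_eigenvalues
  have hlog : Real.log Bc.det = ∑ i, Real.log (hBcP.1.eigenvalues i) := by
    rw [hprod, Real.log_prod]
    exact fun i _ => (heig i).ne'
  have hterm : ∀ i : Fin p, k * (Real.log (hBcP.1.eigenvalues i) + 1 - Real.log k)
      ≤ hBcP.1.eigenvalues i := by
    intro i
    have h1 : Real.log (hBcP.1.eigenvalues i / k) ≤ hBcP.1.eigenvalues i / k - 1 :=
      Real.log_le_sub_one_of_pos (div_pos (heig i) hk)
    rw [Real.log_div (heig i).ne' hk.ne'] at h1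
    have h2 : hBcP.1.eigenvalues i / k * k = hBcP.1.eigenvalues i := div_mul_cancel₀ _ hk.ne'
    nlinarith [mul_le_mul_of_nonneg_left h1 hk.le]
  calc k * (Real.log (B.det / A.det) + p - p * Real.log k)
      = ∑ i : Fin p, k * (Real.log (hBcP.1.eigenvalues i) + 1 - Real.log k) := by
        rw [← hdetBc, hlog, ← Finset.mul_sum]
        congr 1
        rw [Finset.sum_sub_distrib, Finset.sum_add_distrib, Finset.sum_const, Finset.sum_const]
        simp [Finset.card_univ]
    _ ≤ ∑ i, hBcP.1.eigenvalues i := Finset.sum_le_sum fun i _ => hterm i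
    _ = (A⁻¹ * B).trace := by rw [htr, hsum]


section aux

lemma quad_nonneg {p : ℕ} {S : Matrix (Fin p) (Fin p) ℝ} (hS : S.PosDef) (v : Fin p → ℝ) :
    0 ≤ v ⬝ᵥ (S⁻¹ *ᵥ v) := by
  simpa using hS.inv.posSemidef.re_dotProduct_nonneg v

lemma gaussDensity_pos {p : ℕ} (x μ : Fin p → ℝ) {S : Matrix (Fin p) (Fin p) ℝ}
    (hS : S.PosDef) : 0 < gaussDensity x μ S := by
  unfold gaussDensity
  exact mul_pos (mul_pos (rpow_pos_of_pos (by positivity) _)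
    (rpow_pos_of_pos hS.det_pos _)) (Real.exp_pos _)

lemma gaussDensity_le {p : ℕ} (x μ : Fin p → ℝ) {S : Matrix (Fin p) (Fin p) ℝ}
    (hS : S.PosDef) :
    gaussDensity x μ S ≤ (2 * Real.pi) ^ (-(p : ℝ) / 2) * S.det ^ (-(1 : ℝ) / 2) := by
  unfold gaussDensity
  have hq : 0 ≤ (x - μ) ⬝ᵥ (S⁻¹ *ᵥ (x - μ)) := quad_nonneg hS _
  have he : Real.exp (-(1 / 2) * ((x - μ) ⬝ᵥ (S⁻¹ *ᵥ (x - μ)))) ≤ 1 := by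
    rw [Real.exp_le_one_iff]; nlinarith
  have h0 : 0 ≤ (2 * Real.pi) ^ (-(p : ℝ) / 2) * S.det ^ (-(1 : ℝ) / 2) :=
    le_of_lt (mul_pos (rpow_pos_of_pos (by positivity) _) (rpow_pos_of_pos hS.det_pos _))
  calc (2 * Real.pi) ^ (-(p : ℝ) / 2) * S.det ^ (-(1 : ℝ) / 2) *
        Real.exp (-(1 / 2) * ((x - μ) ⬝ᵥ (S⁻¹ *ᵥ (x - μ))))
      ≤ (2 * Real.pi) ^ (-(p : ℝ) / 2) * S.det ^ (-(1 : ℝ) / 2) * 1 :=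
        mul_le_mul_of_nonneg_left he h0
    _ = _ := mul_one _

end aux
theorem sia_objective_upper_bound (p n : ℕ) (hp : 1 ≤ p) (hn : 1 ≤ n)
    (w₁ w₂ c : ℝ) (hw₁ : 0 ≤ w₁) (hw₂ : 0 < w₂) (hc : 0 < c) :
    ∃ C : ℝ, ∀ (x : Fin n → Fin p → ℝ) (π₁ π₂ : ℝ), 0 ≤ π₁ → 0 ≤ π₂ → π₁ + π₂ = 1 →
      ∀ (μ₁ μ₂ : Fin p → ℝ) (S₁ S₂ : Matrix (Fin p) (Fin p) ℝ)
        (hS₁ : S₁.PosDef) (hS₂ : S₂.PosDef),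
        S₁.det ≤ S₂.det →
        (∀ i, hS₁.1.eigenvalues i ≤ c) →
        (∀ i, hS₂.1.eigenvalues i ≤ c) →
        siaObj x π₁ π₂ μ₁ μ₂ S₁ S₂ w₁ w₂ ≤
          -((n : ℝ) / 2) * (1 + w₂) *
            (Real.log ((w₂ / (1 + w₂)) • S₂).det + p) + C := by
  set k : ℝ := ((n : ℝ) + w₂) / w₂ with hkdef
  have hk : 0 < k := by
    apply div_pos _ hw₂
    have : (0:ℝ) < (n:ℝ) := by exact_mod_cast hn
    linarith
  have hkw : w₂ * k = (n : ℝ) + w₂ := by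
    rw [hkdef]; field_simp [hw₂.ne']
  set L : ℝ := Real.log (2 * Real.pi) with hLdef
  set q : ℝ := w₂ / (1 + w₂) with hqdef
  have hq : 0 < q := div_pos hw₂ (by linarith)
  set K : ℝ := -((n : ℝ) * p / 2) * L + w₂ * p / 2 - (w₂ * k / 2) * (p - p * Real.log k)
    with hKdef
  refine ⟨K + ((n : ℝ) * w₂ / 2) * ((p : ℝ) * Real.log c)
    + ((n : ℝ) / 2) * (1 + w₂) * ((p : ℝ) * Real.log q + (p : ℝ)), ?_⟩
  intro x π₁ π₂ hπ₁ hπ₂ hπ μ₁ μ₂ S₁ S₂ hS₁ hS₂ hdet hev₁ hev₂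
  set t₁ : ℝ := Real.log S₁.det with ht₁def
  set t₂ : ℝ := Real.log S₂.det with ht₂def
  have hd₁ : 0 < S₁.det := hS₁.det_pos
  have hd₂ : 0 < S₂.det := hS₂.det_pos
  -- step A : bound on the log-likelihood sum
  have hA : (∑ i, Real.log (π₁ * gaussDensity (x i) μ₁ S₁ + π₂ * gaussDensity (x i) μ₂ S₂))
      ≤ (n : ℝ) * (-(((p : ℝ)) / 2) * L - t₁ / 2) := by
    have hbound : ∀ i, Real.log (π₁ * gaussDensity (x i) μ₁ S₁ + π₂ * gaussDensity (x i) μ₂ S₂)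
        ≤ -(((p : ℝ)) / 2) * L - t₁ / 2 := by
      intro i
      have hg₁ := gaussDensity_pos (x i) μ₁ hS₁
      have hg₂ := gaussDensity_pos (x i) μ₂ hS₂
      have hmixpos : 0 < π₁ * gaussDensity (x i) μ₁ S₁ + π₂ * gaussDensity (x i) μ₂ S₂ := by
        rcases lt_or_eq_of_le hπ₁ with h | h
        · exact add_pos_of_pos_of_nonneg (mul_pos h hg₁) (mul_nonneg hπ₂ hg₂.le)
        · have hπ₂1 : π₂ = 1 := by linarith
          rw [← h, hπ₂1]; simpa using hg₂
      have hD : S₂.det ^ (-(1:ℝ)/2) ≤ S₁.det ^ (-(1:ℝ)/2) :=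
        Real.rpow_le_rpow_of_nonpos hd₁ hdet (by norm_num)
      have h2π : (0:ℝ) < (2 * Real.pi) ^ (-(p : ℝ) / 2) := rpow_pos_of_pos (by positivity) _
      have hb₁ : gaussDensity (x i) μ₁ S₁ ≤ (2 * Real.pi) ^ (-(p : ℝ) / 2) * S₁.det ^ (-(1:ℝ)/2) :=
        gaussDensity_le _ _ hS₁
      have hb₂ : gaussDensity (x i) μ₂ S₂ ≤ (2 * Real.pi) ^ (-(p : ℝ) / 2) * S₁.det ^ (-(1:ℝ)/2) :=
        (gaussDensity_le _ _ hS₂).trans (mul_le_mul_of_nonneg_left hD h2π.le)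
      have hmixle : π₁ * gaussDensity (x i) μ₁ S₁ + π₂ * gaussDensity (x i) μ₂ S₂
          ≤ (2 * Real.pi) ^ (-(p : ℝ) / 2) * S₁.det ^ (-(1:ℝ)/2) := by
        calc π₁ * gaussDensity (x i) μ₁ S₁ + π₂ * gaussDensity (x i) μ₂ S₂
            ≤ π₁ * ((2 * Real.pi) ^ (-(p : ℝ) / 2) * S₁.det ^ (-(1:ℝ)/2))
              + π₂ * ((2 * Real.pi) ^ (-(p : ℝ) / 2) * S₁.det ^ (-(1:ℝ)/2)) :=
              add_le_add (mul_le_mul_of_nonneg_left hb₁ hπ₁) (mul_le_mul_of_nonneg_left hb₂ hπ₂)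
          _ = (2 * Real.pi) ^ (-(p : ℝ) / 2) * S₁.det ^ (-(1:ℝ)/2) := by
              rw [← add_mul, hπ, one_mul]
      calc Real.log (π₁ * gaussDensity (x i) μ₁ S₁ + π₂ * gaussDensity (x i) μ₂ S₂)
          ≤ Real.log ((2 * Real.pi) ^ (-(p : ℝ) / 2) * S₁.det ^ (-(1:ℝ)/2)) :=
            Real.log_le_log hmixpos hmixle
        _ = -(((p : ℝ)) / 2) * L - t₁ / 2 := by
            rw [Real.log_mul (ne_of_gt h2π) (ne_of_gt (rpow_pos_of_pos hd₁ _)),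
              Real.log_rpow (by positivity), Real.log_rpow hd₁]
            ring
    calc (∑ i, Real.log (π₁ * gaussDensity (x i) μ₁ S₁ + π₂ * gaussDensity (x i) μ₂ S₂))
        ≤ ∑ _i : Fin n, (-(((p : ℝ)) / 2) * L - t₁ / 2) := Finset.sum_le_sum fun i _ => hbound i
      _ = (n : ℝ) * (-(((p : ℝ)) / 2) * L - t₁ / 2) := by
          rw [Finset.sum_const, Finset.card_univ, Fintype.card_fin, nsmul_eq_mul]
  -- step B : KL₁₂ ≥ 0
  have hB : 0 ≤ gaussKL μ₁ S₁ μ₂ S₂ := by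
    unfold gaussKL
    have htr := key_trace hS₂ hS₁ 1 one_pos
    rw [Real.log_one] at htr
    have hQ := quad_nonneg hS₂ (μ₂ - μ₁)
    have h1 : Real.log (S₂.det / S₁.det) = t₂ - t₁ := Real.log_div hd₂.ne' hd₁.ne'
    have h2 : Real.log (S₁.det / S₂.det) = t₁ - t₂ := Real.log_div hd₁.ne' hd₂.ne'
    rw [h1]
    rw [h2] at htr
    nlinarith
  -- step C : lower bound on KL₂₁
  have hC : (1 / 2) * (t₁ - t₂ - p + k * (t₂ - t₁ + p - p * Real.log k))
      ≤ gaussKL μ₂ S₂ μ₁ S₁ := by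
    unfold gaussKL
    have htr := key_trace hS₁ hS₂ k hk
    have hQ := quad_nonneg hS₁ (μ₁ - μ₂)
    have h1 : Real.log (S₁.det / S₂.det) = t₁ - t₂ := Real.log_div hd₁.ne' hd₂.ne'
    have h2 : Real.log (S₂.det / S₁.det) = t₂ - t₁ := Real.log_div hd₂.ne' hd₁.ne'
    rw [h1]
    rw [h2] at htr
    nlinarith
  -- eigenvalue bound on det S₂
  have ht₂c : t₂ ≤ (p : ℝ) * Real.log c := by
    have hprod : S₂.det = ∏ i, hS₂.1.eigenvalues i := by
      simpa using hS₂.1.det_eq_prod_eigenvalues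
    have hle : S₂.det ≤ c ^ p := by
      rw [hprod]
      calc ∏ i, hS₂.1.eigenvalues i ≤ ∏ _i : Fin p, c :=
            Finset.prod_le_prod (fun i _ => (hS₂.eigenvalues_pos i).le) (fun i _ => hev₂ i)
        _ = c ^ p := by rw [Finset.prod_const, Finset.card_univ, Fintype.card_fin]
    calc t₂ ≤ Real.log (c ^ p) := Real.log_le_log hd₂ hle
      _ = (p : ℝ) * Real.log c := by rw [Real.log_pow]
  -- det of the scaled matrix
  have hdetscaled : Real.log ((w₂ / (1 + w₂)) • S₂).det = (p : ℝ) * Real.log q + t₂ := by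
    rw [det_smul, Fintype.card_fin, ← hqdef,
      Real.log_mul (by positivity) hd₂.ne', Real.log_pow]
  -- assemble
  have hM : siaObj x π₁ π₂ μ₁ μ₂ S₁ S₂ w₁ w₂
      ≤ (n : ℝ) * (-(((p : ℝ)) / 2) * L - t₁ / 2)
        - w₂ * ((1 / 2) * (t₁ - t₂ - p + k * (t₂ - t₁ + p - p * Real.log k))) := by
    unfold siaObj
    have h1 : 0 ≤ w₁ * gaussKL μ₁ S₁ μ₂ S₂ := mul_nonneg hw₁ hB
    have h2 := mul_le_mul_of_nonneg_left hC hw₂.le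
    linarith
  have hE : (n : ℝ) * (-(((p : ℝ)) / 2) * L - t₁ / 2)
      - w₂ * ((1 / 2) * (t₁ - t₂ - p + k * (t₂ - t₁ + p - p * Real.log k)))
      = K - ((n : ℝ) / 2) * t₂ := by
    rw [hKdef]
    linear_combination ((t₁ - t₂) / 2) * hkw
  rw [hdetscaled]
  have hfin : ((n : ℝ) * w₂ / 2) * t₂ ≤ ((n : ℝ) * w₂ / 2) * ((p : ℝ) * Real.log c) := by
    apply mul_le_mul_of_nonneg_left ht₂c
    positivity
  calc siaObj x π₁ π₂ μ₁ μ₂ S₁ S₂ w₁ w₂ ≤ K - ((n : ℝ) / 2) * t₂ := by rw [← hE]; exact hM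
    _ ≤ _ := by linarith
end

section
/- Let p ≥ 1 be an integer and let w₁ ≥ 0, w₂ ≥ 0 and c > 0 be reals. For every x, μ₁, μ₂ ∈ ℝ^p, every π₁, π₂ ≥ 0 with π₁ + π₂ = 1, and all symmetric positive definite p×p real matrices Σ₁, Σ₂ with det Σ₁ ≤ det Σ₂ and all eigenvalues of Σ₂ at most c, one has log( π₁ N(x; μ₁, Σ₁) + π₂ N(x; μ₂, Σ₂) ) − w₁ KL(N(μ₁,Σ₁), N(μ₂,Σ₂)) − w₂ KL(N(μ₂,Σ₂), N(μ₁,Σ₁)) ≤ (1/2)( (1 + w₂) log det(Σ₁⁻¹) − w₂ tr(Σ₁⁻¹ Σ₂) ) + (p/2)( w₁ + w₂ + w₂ log c ). -/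
open Matrix Real

lemma trace_posSemidef_nonneg {n : Type*} [Fintype n] [DecidableEq n]
    {M : Matrix n n ℝ} (hM : M.PosSemidef) : 0 ≤ M.trace := by
  have : ∀ i, 0 ≤ M i i := by
    intro i
    exact hM.diag_nonneg
  exact Finset.sum_nonneg fun i _ => this i

open scoped MatrixOrder in
lemma trace_mul_nonneg {n : Type*} [Fintype n] [DecidableEq n]
    {A B : Matrix n n ℝ} (hA : A.PosSemidef) (hB : B.PosSemidef) :
    0 ≤ (A * B).trace := by
  set C := CFC.sqrt A with hC
  have h1 : C * C = A := CFC.sqrt_mul_sqrt_self A hA.nonneg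
  have h2 : (A * B).trace = (C * B * C).trace := by
    rw [← h1, mul_assoc, mul_assoc, Matrix.trace_mul_comm, ← mul_assoc]
  rw [h2]
  have hherm : Cᴴ = C := (CFC.sqrt_nonneg A).posSemidef.isHermitian
  have hps : (Cᴴ * B * C).PosSemidef := hB.conjTranspose_mul_mul_same _
  rw [hherm] at hps
  exact trace_posSemidef_nonneg hps

theorem multivariate_pointwise_penalized_bound (p : ℕ) (hp : 1 ≤ p)
    (w₁ w₂ c : ℝ) (hw₁ : 0 ≤ w₁) (hw₂ : 0 ≤ w₂) (hc : 0 < c)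
    (x μ₁ μ₂ : Fin p → ℝ) (π₁ π₂ : ℝ) (hπ₁ : 0 ≤ π₁) (hπ₂ : 0 ≤ π₂) (hπ : π₁ + π₂ = 1)
    (S₁ S₂ : Matrix (Fin p) (Fin p) ℝ) (hS₁ : S₁.PosDef) (hS₂ : S₂.PosDef)
    (hdet : S₁.det ≤ S₂.det) (heig : ∀ i, hS₂.1.eigenvalues i ≤ c) :
    Real.log (π₁ * gaussDensity x μ₁ S₁ + π₂ * gaussDensity x μ₂ S₂)
      - w₁ * gaussKL μ₁ S₁ μ₂ S₂ - w₂ * gaussKL μ₂ S₂ μ₁ S₁ ≤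
      (1 / 2) * ((1 + w₂) * Real.log (S₁⁻¹).det - w₂ * (S₁⁻¹ * S₂).trace)
        + ((p : ℝ) / 2) * (w₁ + w₂ + w₂ * Real.log c) := by
  have hd1 : (0:ℝ) < S₁.det := hS₁.det_pos
  have hd2 : (0:ℝ) < S₂.det := hS₂.det_pos
  -- quadratic forms are nonneg
  have hq : ∀ (S : Matrix (Fin p) (Fin p) ℝ), S.PosDef → ∀ v : Fin p → ℝ,
      0 ≤ v ⬝ᵥ (S⁻¹ *ᵥ v) := by
    intro S hS v
    simpa using hS.inv.posSemidef.re_dotProduct_nonneg v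
  -- density bound
  have hgauss : ∀ (μ : Fin p → ℝ) (S : Matrix (Fin p) (Fin p) ℝ), S.PosDef →
      gaussDensity x μ S ≤ S.det ^ (-(1:ℝ)/2) := by
    intro μ S hS
    have hA : (2 * Real.pi) ^ (-(p : ℝ) / 2) ≤ 1 :=
      Real.rpow_le_one_of_one_le_of_nonpos (by nlinarith [Real.pi_gt_three])
        (by have := Nat.cast_nonneg (α := ℝ) p; linarith)
    have hE : Real.exp (-(1 / 2) * ((x - μ) ⬝ᵥ (S⁻¹ *ᵥ (x - μ)))) ≤ 1 := by
      rw [Real.exp_le_one_iff]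
      nlinarith [hq S hS (x - μ)]
    have hB : (0:ℝ) < S.det ^ (-(1:ℝ)/2) := Real.rpow_pos_of_pos hS.det_pos _
    calc gaussDensity x μ S
        ≤ 1 * S.det ^ (-(1:ℝ)/2) * 1 := by
          unfold gaussDensity
          apply mul_le_mul (mul_le_mul hA le_rfl hB.le zero_le_one) hE (Real.exp_nonneg _)
          rw [one_mul]; exact hB.le
      _ = S.det ^ (-(1:ℝ)/2) := by ring
  -- the mixture is bounded by det S₁ ^ (-1/2)
  have hd21 : S₂.det ^ (-(1:ℝ)/2) ≤ S₁.det ^ (-(1:ℝ)/2) :=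
    Real.rpow_le_rpow_of_nonpos hd1 hdet (by norm_num)
  have hmixle : π₁ * gaussDensity x μ₁ S₁ + π₂ * gaussDensity x μ₂ S₂
      ≤ S₁.det ^ (-(1:ℝ)/2) := by
    have h1 := hgauss μ₁ S₁ hS₁
    have h2 := (hgauss μ₂ S₂ hS₂).trans hd21
    calc π₁ * gaussDensity x μ₁ S₁ + π₂ * gaussDensity x μ₂ S₂
        ≤ π₁ * S₁.det ^ (-(1:ℝ)/2) + π₂ * S₁.det ^ (-(1:ℝ)/2) := by
          gcongr
      _ = S₁.det ^ (-(1:ℝ)/2) := by rw [← add_mul, hπ, one_mul]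
  have hgpos : ∀ (μ : Fin p → ℝ) (S : Matrix (Fin p) (Fin p) ℝ), S.PosDef →
      0 < gaussDensity x μ S := by
    intro μ S hS
    have := hS.det_pos
    unfold gaussDensity
    positivity
  have hmixpos : 0 < π₁ * gaussDensity x μ₁ S₁ + π₂ * gaussDensity x μ₂ S₂ := by
    rcases hπ₁.lt_or_eq with h | h
    · have := hgpos μ₁ S₁ hS₁
      have := hgpos μ₂ S₂ hS₂
      positivity
    · have hπ₂' : π₂ = 1 := by linarith
      rw [← h, hπ₂']
      simpa using hgpos μ₂ S₂ hS₂
  have hlogmix : Real.log (π₁ * gaussDensity x μ₁ S₁ + π₂ * gaussDensity x μ₂ S₂)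
      ≤ (-(1:ℝ)/2) * Real.log S₁.det := by
    calc Real.log (π₁ * gaussDensity x μ₁ S₁ + π₂ * gaussDensity x μ₂ S₂)
        ≤ Real.log (S₁.det ^ (-(1:ℝ)/2)) := Real.log_le_log hmixpos hmixle
      _ = (-(1:ℝ)/2) * Real.log S₁.det := Real.log_rpow hd1 _
  -- log det S₂ ≤ p log c
  have hdetc : S₂.det ≤ c ^ p := by
    rw [hS₂.1.det_eq_prod_eigenvalues]
    push_cast
    calc (∏ i, hS₂.1.eigenvalues i) ≤ ∏ _i : Fin p, c :=
          Finset.prod_le_prod (fun i _ => (hS₂.eigenvalues_pos i).le) (fun i _ => heig i)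
      _ = c ^ p := by simp
  have hlogd2 : Real.log S₂.det ≤ (p : ℝ) * Real.log c := by
    calc Real.log S₂.det ≤ Real.log (c ^ p) := Real.log_le_log hd2 hdetc
      _ = (p : ℝ) * Real.log c := by rw [Real.log_pow]
  -- KL lower bound
  have htr12 : 0 ≤ (S₂⁻¹ * S₁).trace := trace_mul_nonneg hS₂.inv.posSemidef hS₁.posSemidef
  have hlograt : 0 ≤ Real.log (S₂.det / S₁.det) :=
    Real.log_nonneg ((one_le_div hd1).mpr hdet)
  have hKL12 : -(p:ℝ)/2 ≤ gaussKL μ₁ S₁ μ₂ S₂ := by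
    unfold gaussKL
    have := hq S₂ hS₂ (μ₂ - μ₁)
    linarith
  -- upper bound on -KL21
  have hKL21 : -gaussKL μ₂ S₂ μ₁ S₁
      ≤ (1/2) * (Real.log S₂.det - Real.log S₁.det + p - (S₁⁻¹ * S₂).trace) := by
    unfold gaussKL
    have := hq S₁ hS₁ (μ₁ - μ₂)
    rw [Real.log_div hd1.ne' hd2.ne']
    linarith
  -- rewrite log det S₁⁻¹
  have hdetinv : Real.log (S₁⁻¹).det = -Real.log S₁.det := by
    rw [Matrix.det_nonsing_inv, Ring.inverse_eq_inv', Real.log_inv]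
  rw [hdetinv]
  have h1 := mul_le_mul_of_nonneg_left hKL12 hw₁
  have h2 := mul_le_mul_of_nonneg_left hKL21 hw₂
  have h3 := mul_le_mul_of_nonneg_left hlogd2 hw₂
  nlinarith [hlogmix]
end

section
/- Let p ≥ 1 be an integer, let w₂ > 0 and w₃ > 0 be reals, and let A and S be symmetric positive definite p×p real matrices. Then w₃ log det A − w₂ tr(A · S) ≤ w₃ log det( (w₃/w₂) S⁻¹ ) − w₃ p, with equality when A = (w₃/w₂) S⁻¹. -/
open Matrix Real

lemma trace_eq_sum_eig_s6 {n : ℕ} {H : Matrix (Fin n) (Fin n) ℝ} (hH : H.IsHermitian) :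
    H.trace = ∑ i, hH.eigenvalues i := by
  simpa using hH.trace_eq_sum_eigenvalues (𝕜 := ℝ)

lemma log_det_le_trace {n : ℕ} {M : Matrix (Fin n) (Fin n) ℝ} (hM : M.PosDef) :
    Real.log M.det ≤ M.trace - n := by
  rw [hM.isHermitian.det_eq_prod_eigenvalues, trace_eq_sum_eig_s6 hM.isHermitian]
  simp only [RCLike.ofReal_real_eq_id, id, Function.comp]
  rw [Real.log_prod (fun i _ => (hM.eigenvalues_pos i).ne')]
  have h : ∑ i, Real.log (hM.1.eigenvalues i) ≤ ∑ i, (hM.1.eigenvalues i - 1) :=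
    Finset.sum_le_sum fun i _ => Real.log_le_sub_one_of_pos (hM.eigenvalues_pos i)
  simpa [Finset.sum_sub_distrib] using h

lemma posDef_conj {n : ℕ} {A B : Matrix (Fin n) (Fin n) ℝ} (hA : A.PosDef)
    (hB : IsUnit B.det) : (Bᵀ * A * B).PosDef := by
  have hinj : Function.Injective B.mulVec := fun x y h => by
    have := congrArg (fun v => B⁻¹ *ᵥ v) h
    simpa [Matrix.mulVec_mulVec, Matrix.nonsing_inv_mul _ hB] using this
  simpa [conjTranspose_eq_transpose_of_trivial] using hA.conjTranspose_mul_mul_same hinj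

lemma posDef_smul {n : ℕ} {A : Matrix (Fin n) (Fin n) ℝ} (hA : A.PosDef)
    {c : ℝ} (hc : 0 < c) : (c • A).PosDef := by
  refine ⟨?_, ?_⟩
  · unfold Matrix.IsHermitian
    rw [conjTranspose_smul, star_trivial, hA.isHermitian.eq]
  · exact (hA.smul hc).2

theorem logdet_trace_max (p : ℕ) (hp : 1 ≤ p) (w₂ w₃ : ℝ) (hw₂ : 0 < w₂) (hw₃ : 0 < w₃)
    (A S : Matrix (Fin p) (Fin p) ℝ) (hA : A.PosDef) (hS : S.PosDef) :
    w₃ * Real.log A.det - w₂ * (A * S).trace ≤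
      w₃ * Real.log ((w₃ / w₂) • S⁻¹).det - w₃ * p ∧
    (A = (w₃ / w₂) • S⁻¹ →
      w₃ * Real.log A.det - w₂ * (A * S).trace =
        w₃ * Real.log ((w₃ / w₂) • S⁻¹).det - w₃ * p) := by
  have hdetS := hS.det_pos
  have hdetA := hA.det_pos
  have hSunit : IsUnit S.det := isUnit_iff_ne_zero.mpr hdetS.ne'
  set c : ℝ := w₂ / w₃ with hc
  have hcpos : 0 < c := div_pos hw₂ hw₃
  have hwc : w₃ * c = w₂ := by rw [hc]; field_simp
  have hinvc : w₃ / w₂ = c⁻¹ := by rw [hc, inv_div]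
  -- the RHS log term
  have hRHS : Real.log ((w₃ / w₂) • S⁻¹).det = -(p * Real.log c) - Real.log S.det := by
    rw [det_smul, det_nonsing_inv, Ring.inverse_eq_inv, Fintype.card_fin, hinvc,
      Real.log_mul (pow_ne_zero _ (inv_ne_zero hcpos.ne')) (inv_ne_zero hdetS.ne'),
      Real.log_pow, Real.log_inv, Real.log_inv]
    ring
  -- sqrt setup
  open scoped MatrixOrder in set R := CFC.sqrt S with hRdef
  open scoped MatrixOrder in have hRps : R.PosSemidef := Matrix.nonneg_iff_posSemidef.mp (CFC.sqrt_nonneg S)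
  open scoped MatrixOrder in have hRR : R * R = S := CFC.sqrt_mul_sqrt_self S (Matrix.nonneg_iff_posSemidef.mpr hS.posSemidef)
  have hRt : Rᵀ = R := by
    rw [← conjTranspose_eq_transpose_of_trivial]
    exact hRps.1
  have hRdd : R.det * R.det = S.det := by rw [← det_mul, hRR]
  have hdetR : IsUnit R.det := by
    refine isUnit_iff_ne_zero.mpr fun h => ?_
    rw [h, mul_zero] at hRdd
    exact hdetS.ne' hRdd.symm
  have hH : (Rᵀ * A * R).PosDef := posDef_conj hA hdetR
  have hM : (c • (Rᵀ * A * R)).PosDef := posDef_smul hH hcpos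
  have key := log_det_le_trace hM
  have htr : (Rᵀ * A * R).trace = (A * S).trace := by
    rw [hRt, Matrix.trace_mul_cycle, hRR, Matrix.trace_mul_comm]
  have hdetH : (Rᵀ * A * R).det = A.det * S.det := by
    rw [det_mul, det_mul, det_transpose, ← hRdd]
    ring
  rw [det_smul, Fintype.card_fin, hdetH, trace_smul, htr, smul_eq_mul,
    Real.log_mul (pow_ne_zero _ hcpos.ne') (mul_ne_zero hdetA.ne' hdetS.ne'),
    Real.log_pow, Real.log_mul hdetA.ne' hdetS.ne'] at key
  -- key : p * log c + (log A.det + log S.det) ≤ c * (A*S).trace - p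
  constructor
  · rw [hRHS]
    have h1 := mul_le_mul_of_nonneg_left key hw₃.le
    have h2 : w₃ * (c * (A * S).trace) = w₂ * (A * S).trace := by rw [← hwc]; ring
    nlinarith [h1, h2]
  · intro hAeq
    have htr2 : (A * S).trace = (w₃ / w₂) * p := by
      rw [hAeq, Matrix.smul_mul, Matrix.nonsing_inv_mul _ hSunit, trace_smul, trace_one,
        smul_eq_mul, Fintype.card_fin]
    rw [htr2, hAeq]
    have : w₂ * (w₃ / w₂ * p) = w₃ * p := by field_simp
    rw [this]
end
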